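/- (Geometric Bochi-type inequality for hyperbolic spaces.) There is an absolute constant K > 0 with the following property: for every δ ≥ 0, every geodesic δ-hyperbolic metric space X, and every finite set S ⊆ Isom(X), one has L(S) − K·δ ≤ λ₂(S) = max_{a,b ∈ S} { ℓ(a), ℓ(ab)/2 } ≤ L(S). -/

import Mathlib

open Pointwise Filter

/-- The joint displacement of a set of isometries at a point:
`L(S,x) = max_{s ∈ S} d(x, s x)`. -/
noncomputable def jointDispAt {X : Type*} [MetricSpace X] (S : Set (X ≃ᵢ X)) (x : X) : ℝ :=
  sSup ((fun s : X ≃ᵢ X => dist x (s x)) '' S)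

/-- The joint minimal displacement `L(S) = inf_x L(S,x)`. -/
noncomputable def jointMinDisp {X : Type*} [MetricSpace X] (S : Set (X ≃ᵢ X)) : ℝ :=
  sInf (Set.range (jointDispAt S))

/-- The asymptotic joint displacement `ℓ(S) = lim_n L(S^n)/n`; the limit exists by
subadditivity, hence agrees with the `limsup` used here. -/
noncomputable def asympDisp {X : Type*} [MetricSpace X] (S : Set (X ≃ᵢ X)) : ℝ :=
  Filter.limsup (fun n : ℕ => jointMinDisp (S ^ n) / n) Filter.atTop

/-- `λ(S) = max_{s ∈ S} ℓ(s)`. -/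
noncomputable def lamD {X : Type*} [MetricSpace X] (S : Set (X ≃ᵢ X)) : ℝ :=
  sSup ((fun s : X ≃ᵢ X => asympDisp {s}) '' S)

/-- `λ_k(S) = max_{1 ≤ j ≤ k} λ(S^j)/j`. -/
noncomputable def lamK {X : Type*} [MetricSpace X] (k : ℕ) (S : Set (X ≃ᵢ X)) : ℝ :=
  sSup ((fun j : ℕ => lamD (S ^ j) / j) '' Set.Icc 1 k)

/-- `λ_∞(S) = sup_{j ≥ 1} λ(S^j)/j`. -/
noncomputable def lamInf {X : Type*} [MetricSpace X] (S : Set (X ≃ᵢ X)) : ℝ :=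
  sSup ((fun j : ℕ => lamD (S ^ j) / j) '' Set.Ici 1)

/-- A geodesic segment from `a` to `b`: an isometric image of the interval `[0, d(a,b)]`. -/
def IsGeodesicSegment {X : Type*} [MetricSpace X] (s : Set X) (a b : X) : Prop :=
  ∃ f : ℝ → X, f 0 = a ∧ f (dist a b) = b ∧
    (∀ u ∈ Set.Icc (0 : ℝ) (dist a b), ∀ v ∈ Set.Icc (0 : ℝ) (dist a b),
      dist (f u) (f v) = |u - v|) ∧
    s = f '' Set.Icc (0 : ℝ) (dist a b)

/-- A geodesic metric space: every two points are joined by a geodesic segment. -/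
def GeodesicSpace (X : Type*) [MetricSpace X] : Prop :=
  ∀ a b : X, ∃ s : Set X, IsGeodesicSegment s a b

/-- `δ`-hyperbolicity: every geodesic triangle is `δ`-thin, i.e. each side is contained in
the closed `δ`-neighborhood of the union of the other two sides. -/
def GromovHyperbolic (X : Type*) [MetricSpace X] (δ : ℝ) : Prop :=
  ∀ a b c : X, ∀ sab sbc sca : Set X,
    IsGeodesicSegment sab a b → IsGeodesicSegment sbc b c → IsGeodesicSegment sca c a →
      (∀ x ∈ sab, ∃ y ∈ sbc ∪ sca, dist x y ≤ δ) ∧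
      (∀ x ∈ sbc, ∃ y ∈ sab ∪ sca, dist x y ≤ δ) ∧
      (∀ x ∈ sca, ∃ y ∈ sab ∪ sbc, dist x y ≤ δ)

/-- The CAT(0) comparison inequality: for all `a b c` and every midpoint `m` of a geodesic
from `b` to `c`, `2 d(a,m)² ≤ d(a,b)² + d(a,c)² - d(b,c)²/2`. -/
def CAT0 (X : Type*) [MetricSpace X] : Prop :=
  ∀ a b c m : X, dist b m = dist b c / 2 → dist m c = dist b c / 2 →
    2 * dist a m ^ 2 ≤ dist a b ^ 2 + dist a c ^ 2 - dist b c ^ 2 / 2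

/-- A subset is (geodesically) convex if every geodesic segment between two of its points is
contained in it. -/
def GeodConvex {X : Type*} [MetricSpace X] (C : Set X) : Prop :=
  ∀ a ∈ C, ∀ b ∈ C, ∀ s : Set X, IsGeodesicSegment s a b → s ⊆ C

/-- Translation length `L(g) = inf_x d(x, g x)`. -/
noncomputable def transLen {X : Type*} [MetricSpace X] (g : X ≃ᵢ X) : ℝ :=
  sInf (Set.range fun x : X => dist x (g x))

/-- Asymptotic translation length `ℓ(g) = lim_n L(g^n)/n`. -/
noncomputable def asympTransLen {X : Type*} [MetricSpace X] (g : X ≃ᵢ X) : ℝ :=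
  Filter.limsup (fun n : ℕ => transLen (g ^ n) / n) Filter.atTop

universe u

section Dev
variable {X : Type*} [MetricSpace X]

/-- Gromov product of `a` and `b` at `w`. -/
noncomputable def gp (w a b : X) : ℝ := (dist w a + dist w b - dist a b) / 2

lemma gp_nonneg (w a b : X) : 0 ≤ gp w a b := by
  simp only [gp]; linarith [dist_triangle a w b, dist_comm a w]

lemma gp_comm (w a b : X) : gp w a b = gp w b a := by
  simp only [gp]; linarith [dist_comm a b]

lemma gp_le_right (w a b : X) : gp w a b ≤ dist w b := by
  simp only [gp]; linarith [dist_triangle w b a, dist_comm b a]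

lemma gp_isom (g : X ≃ᵢ X) (w a b : X) : gp (g w) (g a) (g b) = gp w a b := by
  simp only [gp, g.dist_eq]

lemma gp_swap (w a b : X) : gp w a b + gp a w b = dist w a := by
  simp only [gp]; linarith [dist_comm a w, dist_comm a b]

/-- reversal of a geodesic segment -/
lemma IsGeodesicSegment.symm {s : Set X} {a b : X} (h : IsGeodesicSegment s a b) :
    IsGeodesicSegment s b a := by
  obtain ⟨f, h0, h1, hiso, him⟩ := h
  refine ⟨fun u => f (dist a b - u), by simpa [dist_comm] using h1, by simp [dist_comm, h0], ?_, ?_⟩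
  · intro u hu v hv
    rw [dist_comm b a] at hu hv
    rw [hiso _ ⟨by linarith [hu.2], by linarith [hu.1]⟩ _ ⟨by linarith [hv.2], by linarith [hv.1]⟩]
    rw [abs_sub_comm]; ring_nf
  · rw [him, dist_comm b a]
    ext p; constructor
    · rintro ⟨u, hu, rfl⟩
      exact ⟨dist a b - u, ⟨by linarith [hu.2], by linarith [hu.1]⟩, by ring_nf⟩
    · rintro ⟨u, hu, rfl⟩
      exact ⟨dist a b - u, ⟨by linarith [hu.2], by linarith [hu.1]⟩, rfl⟩

lemma IsGeodesicSegment.dist_add {s : Set X} {a b : X} (h : IsGeodesicSegment s a b)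
    {p : X} (hp : p ∈ s) : dist a p + dist p b = dist a b := by
  obtain ⟨f, h0, h1, hiso, him⟩ := h
  rw [him] at hp
  obtain ⟨u, hu, rfl⟩ := hp
  have hd : (0:ℝ) ≤ dist a b := dist_nonneg
  have e1 := hiso 0 ⟨le_refl _, hd⟩ u hu
  rw [h0] at e1
  have e2 := hiso u hu (dist a b) ⟨hd, le_refl _⟩
  rw [h1] at e2
  rw [e1, e2, abs_sub_comm (0:ℝ) u, sub_zero, abs_of_nonneg hu.1,
    abs_of_nonpos (by linarith [hu.2] : u - dist a b ≤ 0)]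
  ring

lemma IsGeodesicSegment.exists_point {s : Set X} {a b : X} (h : IsGeodesicSegment s a b)
    {t : ℝ} (ht : t ∈ Set.Icc (0:ℝ) (dist a b)) :
    ∃ p ∈ s, dist a p = t ∧ dist p b = dist a b - t := by
  obtain ⟨f, h0, h1, hiso, him⟩ := h
  have hd : (0:ℝ) ≤ dist a b := dist_nonneg
  have e1 := hiso 0 ⟨le_refl _, hd⟩ t ht
  rw [h0] at e1
  have e2 := hiso t ht (dist a b) ⟨hd, le_refl _⟩
  rw [h1] at e2
  refine ⟨f t, by rw [him]; exact ⟨t, ht, rfl⟩, ?_, ?_⟩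
  · rw [e1, abs_sub_comm (0:ℝ) t, sub_zero, abs_of_nonneg ht.1]
  · rw [e2, abs_of_nonpos (by linarith [ht.2] : t - dist a b ≤ 0)]; ring

/-- Any point on a geodesic from `a` to `b` is at distance at least `gp w a b` from `w`. -/
lemma gp_le_dist_of_on_seg {w a b p : X} (hp : dist a p + dist p b = dist a b) :
    gp w a b ≤ dist w p := by
  simp only [gp]
  linarith [dist_triangle w p a, dist_triangle w p b, dist_comm p a]

/-- the four point inequality from thin triangles -/
lemma four_point {δ : ℝ} (hgeo : GeodesicSpace X) (hhyp : GromovHyperbolic X δ)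
    (w p q r : X) : min (gp w p q) (gp w q r) - 3*δ ≤ gp w p r := by
  obtain ⟨spr, hpr⟩ := hgeo p r
  obtain ⟨srw, hrw⟩ := hgeo r w
  obtain ⟨swp, hwp⟩ := hgeo w p
  obtain ⟨spq, hpq⟩ := hgeo p q
  obtain ⟨sqr, hqr⟩ := hgeo q r
  -- point m on [p,r] at distance gp p w r from p
  obtain ⟨m, hm, hm1, hm2⟩ := hpr.exists_point (t := gp p w r)
    ⟨gp_nonneg _ _ _, gp_le_right p w r⟩
  -- upper bound: dist w m ≤ gp w p r + 2δ
  have hup : dist w m ≤ gp w p r + 2*δ := by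
    obtain ⟨v, hv, hvd⟩ := (hhyp p r w spr srw swp hpr hrw hwp).1 m hm
    rcases hv with hv | hv
    · -- v on [r,w]
      have hsum := hrw.dist_add hv
      have h1 : dist r m ≤ dist r v + δ := by
        linarith [dist_triangle r v m, dist_comm v m, hvd]
      have h2 : dist w m ≤ dist w v + δ := by
        linarith [dist_triangle w v m, dist_comm v m, hvd]
      simp only [gp] at hm2 ⊢
      linarith [hsum, h1, h2, hm2, dist_comm m r, dist_comm v w, dist_comm w r,
        dist_comm w p, dist_comm p r]
    · -- v on [w,p]
      have hsum := hwp.dist_add hv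
      have h1 : dist p m ≤ dist p v + δ := by
        linarith [dist_triangle p v m, dist_comm v m, hvd]
      have h2 : dist w m ≤ dist w v + δ := by
        linarith [dist_triangle w v m, dist_comm v m, hvd]
      simp only [gp] at hm1 ⊢
      linarith [hsum, h1, h2, hm1, dist_comm v p, dist_comm w p]
  -- lower bound from triangle p q r
  have hlow : min (gp w p q) (gp w q r) - δ ≤ dist w m := by
    obtain ⟨v, hv, hvd⟩ := (hhyp p q r spq sqr spr hpq hqr hpr.symm).2.2 m hm
    have h2 : dist w v ≤ dist w m + δ := by
      linarith [dist_triangle w m v, hvd]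
    rcases hv with hv | hv
    · have h3 := gp_le_dist_of_on_seg (w := w) (hpq.dist_add hv)
      linarith [min_le_left (gp w p q) (gp w q r)]
    · have h3 := gp_le_dist_of_on_seg (w := w) (hqr.dist_add hv)
      linarith [min_le_right (gp w p q) (gp w q r)]
  linarith


lemma jointDispAt_nonneg (S : Set (X ≃ᵢ X)) (x : X) : 0 ≤ jointDispAt S x :=
  Real.sSup_nonneg (by rintro r ⟨s, hs, rfl⟩; exact dist_nonneg)

lemma jointMinDisp_nonneg (S : Set (X ≃ᵢ X)) : 0 ≤ jointMinDisp S :=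
  Real.sInf_nonneg (by rintro r ⟨x, rfl⟩; exact jointDispAt_nonneg S x)

lemma jointDispAt_singleton (g : X ≃ᵢ X) (x : X) : jointDispAt {g} x = dist x (g x) := by
  simp [jointDispAt]

lemma jointMinDisp_singleton (g : X ≃ᵢ X) :
    jointMinDisp {g} = sInf (Set.range fun y : X => dist y (g y)) := by
  unfold jointMinDisp
  congr 1
  ext r
  constructor
  · rintro ⟨y, rfl⟩; exact ⟨y, (jointDispAt_singleton g y).symm⟩
  · rintro ⟨y, rfl⟩; exact ⟨y, jointDispAt_singleton g y⟩

lemma pow_apply_succ (g : X ≃ᵢ X) (n : ℕ) (y : X) : (g^(n+1)) y = g ((g^n) y) := by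
  rw [pow_succ']; rfl

lemma dist_pow_le (g : X ≃ᵢ X) (y : X) : ∀ n : ℕ, dist y ((g^n) y) ≤ n * dist y (g y) := by
  intro n
  induction n with
  | zero => simp
  | succ n ih =>
    rw [pow_apply_succ]
    have h1 : dist y (g ((g^n) y)) ≤ dist y (g y) + dist (g y) (g ((g^n) y)) :=
      dist_triangle _ _ _
    rw [g.dist_eq] at h1
    push_cast
    linarith

lemma dist_pow_add_le (g : X ≃ᵢ X) (y : X) (m n : ℕ) :
    dist y ((g^(m+n)) y) ≤ dist y ((g^m) y) + dist y ((g^n) y) := by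
  have h0 : (g^(m+n)) y = (g^m) ((g^n) y) := by rw [pow_add]; rfl
  rw [h0]
  have h1 := dist_triangle y ((g^m) y) ((g^m) ((g^n) y))
  rw [(g^m).dist_eq] at h1
  linarith

lemma jointMinDisp_pow_singleton_le (g : X ≃ᵢ X) (n : ℕ) (y : X) :
    jointMinDisp ({g} ^ n) ≤ dist y ((g^n) y) := by
  rw [Set.singleton_pow, jointMinDisp_singleton]
  exact csInf_le ⟨0, by rintro r ⟨z, rfl⟩; exact dist_nonneg⟩ ⟨y, rfl⟩

lemma asympDisp_singleton_le {g : X ≃ᵢ X} {c : ℝ}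
    (h : ∀ n : ℕ, 1 ≤ n → jointMinDisp ({g} ^ n) ≤ n * c) : asympDisp {g} ≤ c := by
  apply limsup_le_of_le
  · exact isCoboundedUnder_le_of_eventually_le atTop (x := 0)
      (Filter.Eventually.of_forall fun n =>
        div_nonneg (jointMinDisp_nonneg _) (Nat.cast_nonneg n))
  · filter_upwards [Filter.eventually_ge_atTop 1] with n hn
    have hn0 : (0:ℝ) < n := by exact_mod_cast hn
    rw [div_le_iff₀ hn0]
    calc jointMinDisp ({g} ^ n) ≤ n * c := h n hn
      _ = c * n := by ring

lemma asympDisp_singleton_bddAbove (g : X ≃ᵢ X) (x : X) :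
    IsBoundedUnder (· ≤ ·) atTop (fun n : ℕ => jointMinDisp ({g} ^ n) / n) := by
  refine isBoundedUnder_of ⟨dist x (g x), fun n => ?_⟩
  rcases Nat.eq_zero_or_pos n with rfl | hn
  · simp [dist_nonneg]
  · have hn0 : (0:ℝ) < n := by exact_mod_cast hn
    rw [div_le_iff₀ hn0]
    calc jointMinDisp ({g} ^ n) ≤ dist x ((g^n) x) := jointMinDisp_pow_singleton_le g n x
      _ ≤ n * dist x (g x) := dist_pow_le g x n
      _ = dist x (g x) * n := by ring

lemma asympDisp_singleton_nonneg (g : X ≃ᵢ X) (x : X) : 0 ≤ asympDisp {g} := by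
  apply le_limsup_of_frequently_le
  · exact Filter.Frequently.of_forall fun n =>
      div_nonneg (jointMinDisp_nonneg _) (Nat.cast_nonneg n)
  · exact asympDisp_singleton_bddAbove g x

lemma asympDisp_singleton_ge {g : X ≃ᵢ X} {c : ℝ} (x : X)
    (h : ∀ n : ℕ, 1 ≤ n → ∀ y : X, (n:ℝ) * c ≤ dist y ((g^n) y)) :
    c ≤ asympDisp {g} := by
  apply le_limsup_of_frequently_le
  · rw [Filter.frequently_atTop]
    intro N
    refine ⟨max N 1, le_max_left _ _, ?_⟩
    set n := max N 1
    have hn : 1 ≤ n := le_max_right _ _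
    have hn0 : (0:ℝ) < n := by exact_mod_cast hn
    rw [le_div_iff₀ hn0]
    rw [Set.singleton_pow, jointMinDisp_singleton]
    refine le_csInf ⟨dist x ((g^n) x), ⟨x, rfl⟩⟩ ?_
    rintro r ⟨y, rfl⟩
    calc c * n = (n:ℝ) * c := by ring
      _ ≤ dist y ((g^n) y) := h n hn y
  · exact asympDisp_singleton_bddAbove g x

/-- The key displacement lemma: `ℓ(g) ≥ d(x,g²x) - d(x,gx) - 2δ₁`. -/
lemma disp_lemma {δ₁ : ℝ} (hδ₁ : 0 ≤ δ₁)
    (h4 : ∀ w p q r : X, min (gp w p q) (gp w q r) - δ₁ ≤ gp w p r)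
    (g : X ≃ᵢ X) (x : X) :
    dist x (g (g x)) - dist x (g x) - 2*δ₁ ≤ asympDisp {g} := by
  set D := dist x (g x) with hD
  set ρ := gp (g x) x (g (g x)) with hρ
  have hρD : 2*ρ = 2*D - dist x (g (g x)) := by
    have e1 : dist (g x) x = D := dist_comm (g x) x
    have e2 : dist (g x) (g (g x)) = D := g.dist_eq x (g x)
    simp only [hρ, gp]
    rw [e1, e2]; ring
  have hρ0 : 0 ≤ ρ := gp_nonneg _ _ _
  by_cases hc : dist x (g (g x)) - D ≤ 2*δ₁
  · linarith [asympDisp_singleton_nonneg g x]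
  push_neg at hc
  -- so D > 2ρ + 2δ₁
  have hDρ : 2*ρ + 2*δ₁ < D := by linarith
  have key : ∀ i : ℕ, gp ((g^i) x) x ((g^(i+1)) x) ≤ ρ + δ₁ ∧
      ((i:ℝ)+1) * D - 2*i*(ρ+δ₁) ≤ dist x ((g^(i+1)) x) := by
    intro i
    induction i with
    | zero =>
      constructor
      · have : gp ((g^0) x) x ((g^1) x) = 0 := by
          simp only [pow_zero, pow_one, gp]
          simp [dist_self]
        rw [this]; linarith
      · simp [pow_one, hD]
    | succ i ih =>
      rw [show i + 1 + 1 = i + 2 from rfl]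
      have e01 : ((g^(i+1)) x) = (g^i) (g x) := by rw [pow_succ]; rfl
      have e02 : ((g^(i+2)) x) = (g^i) (g (g x)) := by
        have h' : g^(i+2) = g^i * g^2 := by rw [← pow_add]
        have h'' : (g^2) x = g (g x) := by rw [pow_two]; rfl
        rw [h']
        show ((g^i) ((g^2) x)) = _
        rw [h'']
      have ed : dist ((g^i) x) ((g^(i+1)) x) = D := by
        rw [e01, (g^i).dist_eq]
      have eρ : gp ((g^(i+1)) x) ((g^i) x) ((g^(i+2)) x) = ρ := by
        rw [e01, e02, hρ]
        exact gp_isom (g^i) (g x) x (g (g x))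
      -- B := gp x_{i+1} x_i x is large
      have hswap := gp_swap ((g^i) x) ((g^(i+1)) x) x
      have hcm : gp ((g^i) x) ((g^(i+1)) x) x = gp ((g^i) x) x ((g^(i+1)) x) :=
        gp_comm _ _ _
      have hB : D - ρ - δ₁ ≤ gp ((g^(i+1)) x) ((g^i) x) x := by
        rw [hcm] at hswap
        linarith [ih.1, ed]
      -- four point
      have h4i := h4 ((g^(i+1)) x) ((g^i) x) x ((g^(i+2)) x)
      rw [eρ] at h4i
      have hQ : gp ((g^(i+1)) x) x ((g^(i+2)) x) ≤ ρ + δ₁ := by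
        rcases min_cases (gp ((g^(i+1)) x) ((g^i) x) x) (gp ((g^(i+1)) x) x ((g^(i+2)) x)) with
          ⟨heq, hle⟩ | ⟨heq, hle⟩
        · rw [heq] at h4i; linarith
        · rw [heq] at h4i; linarith
      constructor
      · exact_mod_cast hQ
      · -- distance estimate
        have ed2 : dist ((g^(i+1)) x) ((g^(i+2)) x) = D := by
          have e03 : ((g^(i+2)) x) = (g^(i+1)) (g x) := by rw [pow_succ]; rfl
          rw [e03, (g^(i+1)).dist_eq]
        have hgpdef : gp ((g^(i+1)) x) x ((g^(i+2)) x) =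
            (dist ((g^(i+1)) x) x + dist ((g^(i+1)) x) ((g^(i+2)) x)
              - dist x ((g^(i+2)) x)) / 2 := rfl
        have hd1 : dist ((g^(i+1)) x) x = dist x ((g^(i+1)) x) := dist_comm _ _
        have := ih.2
        push_cast
        push_cast at this
        rw [hgpdef, ed2, hd1] at hQ
        linarith
  have hm : ∀ m : ℕ, 1 ≤ m → (m:ℝ) * (D - 2*(ρ+δ₁)) ≤ dist x ((g^m) x) := by
    intro m hm1
    obtain ⟨i, rfl⟩ := Nat.exists_eq_add_of_le hm1
    have := (key i).2
    have hcast : ((1+i : ℕ) : ℝ) = (i:ℝ) + 1 := by push_cast; ring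
    rw [hcast]
    have hieq : (1 + i) = (i + 1) := by ring
    rw [hieq]
    nlinarith [this, hρ0, hδ₁, Nat.cast_nonneg (α := ℝ) i]
  set c := D - 2*(ρ+δ₁) with hcdef
  have hy : ∀ n : ℕ, 1 ≤ n → ∀ y : X, (n:ℝ) * c ≤ dist y ((g^n) y) := by
    intro n hn y
    have hiter : ∀ k : ℕ, dist y ((g^(n*k)) y) ≤ k * dist y ((g^n) y) := by
      intro k
      induction k with
      | zero => simp
      | succ k ihk =>
        have : n*(k+1) = n*k + n := by ring
        rw [this]
        have := dist_pow_add_le g y (n*k) n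
        push_cast
        linarith
    have hk : ∀ k : ℕ, 1 ≤ k → (n:ℝ) * c - 2 * dist x y / k ≤ dist y ((g^n) y) := by
      intro k hk1
      have hk0 : (0:ℝ) < k := by exact_mod_cast hk1
      have h1 : ((n*k : ℕ):ℝ) * c ≤ dist x ((g^(n*k)) x) := hm (n*k) (Nat.one_le_iff_ne_zero.2 (by positivity))
      have h2 : dist x ((g^(n*k)) x) ≤ 2 * dist x y + dist y ((g^(n*k)) y) := by
        have t1 := dist_triangle x y ((g^(n*k)) y)
        have t2 := dist_triangle y ((g^(n*k)) y) ((g^(n*k)) x)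
        have t3 : dist ((g^(n*k)) y) ((g^(n*k)) x) = dist y x := (g^(n*k)).dist_eq y x
        have t4 := dist_triangle x ((g^(n*k)) y) ((g^(n*k)) x)
        rw [t3] at t4
        linarith [dist_comm y x, t1, t4]
      have h3 := hiter k
      push_cast at h1
      have hgoal : ((n:ℝ) * c - dist y ((g^n) y)) * k ≤ 2 * dist x y := by
        nlinarith [h1, h2, h3]
      have h4' : (n:ℝ)*c - dist y ((g^n) y) ≤ 2*dist x y / k := by
        rw [le_div_iff₀ hk0]; linarith [hgoal]
      linarith [h4']
    have htend : Tendsto (fun k : ℕ => (n:ℝ) * c - 2 * dist x y / k) atTop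
        (nhds ((n:ℝ)*c - 0)) :=
      tendsto_const_nhds.sub (tendsto_const_div_atTop_nhds_zero_nat _)
    rw [sub_zero] at htend
    refine le_of_tendsto htend ?_
    filter_upwards [Filter.eventually_ge_atTop 1] with k hk1
    exact hk k hk1
  have hfin := asympDisp_singleton_ge x hy
  rw [hcdef] at hfin
  linarith [hρD, hfin]

lemma dist_inv_apply (g : X ≃ᵢ X) (x : X) : dist x (g⁻¹ x) = dist x (g x) := by
  rw [← g.dist_eq x (g⁻¹ x)]
  have : g (g⁻¹ x) = x := by simp
  rw [this, dist_comm]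

/-- Moving distance `t` towards `z = a x` decreases the displacement of `b`. -/
lemma move_lemma {δ₁ : ℝ} (hδ₁ : 0 ≤ δ₁)
    (h4 : ∀ w p q r : X, min (gp w p q) (gp w q r) - δ₁ ≤ gp w p r)
    (b : X ≃ᵢ X) (x y z : X) (t : ℝ)
    (hxy : dist x y = t) (hyz : dist y z = dist x z - t)
    (hb1 : t ≤ gp x z (b x))
    (hb2 : t ≤ gp (b x) x (b (b x)))
    (hb3 : 2*t ≤ dist x (b x)) :
    dist y (b y) ≤ dist x (b x) - t + 8*δ₁ := by
  have hgxyz : gp x y z = t := by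
    simp only [gp]; rw [hxy, hyz]; ring
  have P1 : t - δ₁ ≤ gp x y (b x) := by
    have h := h4 x y z (b x)
    rw [hgxyz] at h
    linarith [le_min (le_refl t) hb1, h]
  have hd_y_bx : dist y (b x) ≤ dist x (b x) - t + 2*δ₁ := by
    have hdef : gp x y (b x) = (dist x y + dist x (b x) - dist y (b x))/2 := rfl
    rw [hxy] at hdef
    linarith [P1, hdef]
  have P2 : gp (b x) (b y) (b (b x)) = gp x y (b x) := gp_isom b x y (b x)
  have P3 : t - 2*δ₁ ≤ gp (b x) x (b y) := by
    have h := h4 (b x) x (b (b x)) (b y)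
    have hcm : gp (b x) (b (b x)) (b y) = gp (b x) (b y) (b (b x)) := gp_comm _ _ _
    have hmin : t - δ₁ ≤ min (gp (b x) x (b (b x))) (gp (b x) (b (b x)) (b y)) := by
      refine le_min (by linarith) ?_
      rw [hcm, P2]; linarith [P1]
    linarith
  have P4 : dist x (b x) - t ≤ gp (b x) y x := by
    have hdef : gp (b x) y x = (dist (b x) y + dist (b x) x - dist y x)/2 := rfl
    have htr : dist x (b x) ≤ dist x y + dist y (b x) := dist_triangle x y (b x)
    rw [hxy] at htr
    linarith [hdef, dist_comm (b x) y, dist_comm (b x) x, dist_comm y x, hxy, htr]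
  have P5 : t - 3*δ₁ ≤ gp (b x) y (b y) := by
    have h := h4 (b x) y x (b y)
    have hmin : t - 2*δ₁ ≤ min (gp (b x) y x) (gp (b x) x (b y)) :=
      le_min (by linarith [P4, hb3]) P3
    linarith
  have hfin : gp (b x) y (b y) = (dist (b x) y + dist (b x) (b y) - dist y (b y))/2 := rfl
  have e1 : dist (b x) (b y) = t := by rw [b.dist_eq, hxy]
  linarith [hfin, e1, dist_comm (b x) y, hd_y_bx, P5, dist_nonneg (x := x) (y := y), hxy]

end Dev

/-- geometric Bochi-type inequality for hyperbolic spaces. There is an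
absolute constant `K > 0` such that for every `δ ≥ 0`, every geodesic `δ`-hyperbolic space `X`
and every finite set `S` of isometries of `X`,
`L(S) − Kδ ≤ λ₂(S) = max_{a,b ∈ S} {ℓ(a), ℓ(ab)/2} ≤ L(S)`. -/
theorem exists_const_bochi_hyperbolic :
    ∃ K : ℝ, 0 < K ∧ ∀ (δ : ℝ), 0 ≤ δ → ∀ (X : Type u) [MetricSpace X],
      GeodesicSpace X → GromovHyperbolic X δ →
        ∀ S : Set (X ≃ᵢ X), S.Finite → S.Nonempty →
          jointMinDisp S - K * δ ≤ max (lamD S) (lamD (S ^ 2) / 2) ∧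
          max (lamD S) (lamD (S ^ 2) / 2) =
            sSup ((fun p : (X ≃ᵢ X) × (X ≃ᵢ X) =>
              max (asympDisp {p.1}) (asympDisp {p.1 * p.2} / 2)) '' S ×ˢ S) ∧
          max (lamD S) (lamD (S ^ 2) / 2) ≤ jointMinDisp S := by
  refine ⟨10000, by norm_num, ?_⟩
  intro δ hδ X _ hgeo hhyp S hSfin hSne
  classical
  by_cases hXne : Nonempty X
  case neg =>
    haveI hXe : IsEmpty X := not_nonempty_iff.mp hXne
    have hjm : ∀ S' : Set (X ≃ᵢ X), jointMinDisp S' = 0 := by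
      intro S'
      unfold jointMinDisp
      rw [Set.range_eq_empty, Real.sInf_empty]
    have hasymp : ∀ T : Set (X ≃ᵢ X), asympDisp T = 0 := by
      intro T
      unfold asympDisp
      have h : (fun n : ℕ => jointMinDisp (T ^ n) / n) = fun _ => 0 := by
        funext n; rw [hjm, zero_div]
      rw [h, limsup_const]
    have hlamD : ∀ T : Set (X ≃ᵢ X), T.Nonempty → lamD T = 0 := by
      intro T hT
      unfold lamD
      have h : (fun s : X ≃ᵢ X => asympDisp {s}) '' T = {0} := by
        apply Set.eq_singleton_iff_nonempty_unique_mem.mpr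
        exact ⟨hT.image _, by rintro r ⟨s, hs, rfl⟩; exact hasymp _⟩
      rw [h, csSup_singleton]
    have hS2ne : (S^2).Nonempty := by rw [pow_two]; exact hSne.mul hSne
    have hprod : ((fun p : (X ≃ᵢ X) × (X ≃ᵢ X) =>
        max (asympDisp {p.1}) (asympDisp {p.1 * p.2} / 2)) '' S ×ˢ S) = {0} := by
      apply Set.eq_singleton_iff_nonempty_unique_mem.mpr
      refine ⟨(hSne.prod hSne).image _, ?_⟩
      rintro r ⟨p, hp, rfl⟩
      show max (asympDisp {p.1}) (asympDisp {p.1 * p.2} / 2) = 0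
      rw [hasymp, hasymp]
      norm_num
    rw [hjm, hlamD S hSne, hlamD _ hS2ne, hprod, csSup_singleton]
    norm_num
    positivity
  case pos =>
  obtain ⟨x₀⟩ := id hXne
  obtain ⟨s₀, hs₀⟩ := id hSne
  have hS2fin : (S^2).Finite := by rw [pow_two]; exact hSfin.mul hSfin
  have hS2ne : (S^2).Nonempty := by rw [pow_two]; exact hSne.mul hSne
  have hbddAt : ∀ x : X, BddAbove ((fun s : X ≃ᵢ X => dist x (s x)) '' S) :=
    fun x => (hSfin.image _).bddAbove
  have hbddrange : BddBelow (Set.range (jointDispAt S)) :=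
    ⟨0, by rintro r ⟨xx, rfl⟩; exact jointDispAt_nonneg S xx⟩
  have hdispAt_le : ∀ (x : X) (s : X ≃ᵢ X), s ∈ S → dist x (s x) ≤ jointDispAt S x :=
    fun x s hs => le_csSup (hbddAt x) ⟨s, hs, rfl⟩
  -- Part 3 ingredients
  have h_ell_le : ∀ s ∈ S, asympDisp {s} ≤ jointMinDisp S := by
    intro s hs
    refine le_csInf ⟨jointDispAt S x₀, ⟨x₀, rfl⟩⟩ ?_
    rintro r ⟨xx, rfl⟩
    apply asympDisp_singleton_le
    intro n hn
    calc jointMinDisp ({s}^n) ≤ dist xx ((s^n) xx) := jointMinDisp_pow_singleton_le s n xx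
      _ ≤ n * dist xx (s xx) := dist_pow_le s xx n
      _ ≤ n * jointDispAt S xx :=
        mul_le_mul_of_nonneg_left (hdispAt_le xx s hs) (Nat.cast_nonneg n)
  have h_ell2_le : ∀ g ∈ S^2, asympDisp {g} ≤ 2 * jointMinDisp S := by
    intro g hg
    rw [pow_two] at hg
    rw [Set.mem_mul] at hg
    obtain ⟨p, hp, q, hq, rfl⟩ := hg
    have hhalf : asympDisp {p * q} / 2 ≤ jointMinDisp S := by
      refine le_csInf ⟨jointDispAt S x₀, ⟨x₀, rfl⟩⟩ ?_
      rintro r ⟨xx, rfl⟩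
      have hle : asympDisp {p * q} ≤ 2 * jointDispAt S xx := by
        apply asympDisp_singleton_le
        intro n hn
        have hone : dist xx ((p*q) xx) ≤ 2 * jointDispAt S xx := by
          have h1 : dist xx ((p*q) xx) ≤ dist xx (p xx) + dist (p xx) (p (q xx)) :=
            dist_triangle _ _ _
          rw [p.dist_eq] at h1
          have := hdispAt_le xx p hp
          have := hdispAt_le xx q hq
          linarith
        calc jointMinDisp ({p*q}^n) ≤ dist xx (((p*q)^n) xx) :=
              jointMinDisp_pow_singleton_le (p*q) n xx
          _ ≤ n * dist xx ((p*q) xx) := dist_pow_le (p*q) xx n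
          _ ≤ n * (2 * jointDispAt S xx) :=
              mul_le_mul_of_nonneg_left hone (Nat.cast_nonneg n)
      linarith
    linarith
  have part3 : max (lamD S) (lamD (S ^ 2) / 2) ≤ jointMinDisp S := by
    apply max_le
    · exact csSup_le (hSne.image _) (by rintro r ⟨s, hs, rfl⟩; exact h_ell_le s hs)
    · have h2 : lamD (S^2) ≤ 2 * jointMinDisp S :=
        csSup_le (hS2ne.image _) (by rintro r ⟨g, hg, rfl⟩; exact h_ell2_le g hg)
      linarith
  -- Part 2
  have hPfin : (((fun p : (X ≃ᵢ X) × (X ≃ᵢ X) =>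
      max (asympDisp {p.1}) (asympDisp {p.1 * p.2} / 2)) '' S ×ˢ S)).Finite :=
    (hSfin.prod hSfin).image _
  have hPne : (((fun p : (X ≃ᵢ X) × (X ≃ᵢ X) =>
      max (asympDisp {p.1}) (asympDisp {p.1 * p.2} / 2)) '' S ×ˢ S)).Nonempty :=
    (hSne.prod hSne).image _
  have part2 : max (lamD S) (lamD (S ^ 2) / 2) =
      sSup ((fun p : (X ≃ᵢ X) × (X ≃ᵢ X) =>
        max (asympDisp {p.1}) (asympDisp {p.1 * p.2} / 2)) '' S ×ˢ S) := by
    apply le_antisymm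
    · apply max_le
      · apply csSup_le (hSne.image _)
        rintro r ⟨s, hs, rfl⟩
        calc asympDisp {s} ≤ max (asympDisp {s}) (asympDisp {s * s₀} / 2) := le_max_left _ _
          _ ≤ _ := le_csSup hPfin.bddAbove ⟨(s, s₀), Set.mem_prod.mpr ⟨hs, hs₀⟩, rfl⟩
      · have h2 : lamD (S^2) ≤ 2 * sSup ((fun p : (X ≃ᵢ X) × (X ≃ᵢ X) =>
            max (asympDisp {p.1}) (asympDisp {p.1 * p.2} / 2)) '' S ×ˢ S) := by
          apply csSup_le (hS2ne.image _)
          rintro r ⟨g, hg, rfl⟩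
          rw [pow_two, Set.mem_mul] at hg
          obtain ⟨p, hp, q, hq, rfl⟩ := hg
          have h3 : asympDisp {p * q} / 2 ≤ max (asympDisp {p}) (asympDisp {p * q} / 2) :=
            le_max_right _ _
          have h4 := le_csSup hPfin.bddAbove
            (⟨(p, q), Set.mem_prod.mpr ⟨hp, hq⟩, rfl⟩ :
              max (asympDisp {p}) (asympDisp {p * q} / 2) ∈
                ((fun p : (X ≃ᵢ X) × (X ≃ᵢ X) =>
                  max (asympDisp {p.1}) (asympDisp {p.1 * p.2} / 2)) '' S ×ˢ S))
          linarith
        linarith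
    · apply csSup_le hPne
      rintro r ⟨⟨p, q⟩, hpq, rfl⟩
      rw [Set.mem_prod] at hpq
      apply max_le
      · calc asympDisp {p} ≤ lamD S := le_csSup (hSfin.image _).bddAbove ⟨p, hpq.1, rfl⟩
          _ ≤ _ := le_max_left _ _
      · have h5 : asympDisp {p * q} ≤ lamD (S^2) := by
          apply le_csSup (hS2fin.image _).bddAbove
          exact ⟨p * q, by rw [pow_two]; exact Set.mul_mem_mul hpq.1 hpq.2, rfl⟩
        have h6 : lamD (S^2)/2 ≤ max (lamD S) (lamD (S ^ 2) / 2) := le_max_right _ _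
        linarith
  -- Part 1
  have h4 : ∀ w p q r : X, min (gp w p q) (gp w q r) - 3*δ ≤ gp w p r :=
    four_point hgeo hhyp
  have hδ₁ : 0 ≤ 3*δ := by linarith
  have part1 : jointMinDisp S - 10000 * δ ≤ max (lamD S) (lamD (S ^ 2) / 2) := by
    by_contra hcon
    push_neg at hcon
    set lam := max (lamD S) (lamD (S ^ 2) / 2) with hlamdef
    set l := jointMinDisp S with hldef
    set δ₁ := 3*δ with hδ₁def
    have hlam0 : 0 ≤ lam := by
      have h1 : 0 ≤ asympDisp {s₀} := asympDisp_singleton_nonneg s₀ x₀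
      have h2 : asympDisp {s₀} ≤ lamD S := le_csSup (hSfin.image _).bddAbove ⟨s₀, hs₀, rfl⟩
      have h3 : lamD S ≤ lam := le_max_left _ _
      linarith
    set t := (l - lam)/20 with htdef
    have ht9 : 9*δ₁ < t := by
      rw [hδ₁def, htdef]
      by_contra hno
      push_neg at hno
      linarith
    have ht0 : 0 < t := by
      rw [htdef]; linarith
    set ε := (t - 8*δ₁)/2 with hεdef
    have hε : 0 < ε := by rw [hεdef]; linarith
    obtain ⟨r, ⟨x, rfl⟩, hx⟩ := exists_lt_of_csInf_lt (s := Set.range (jointDispAt S))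
      ⟨jointDispAt S x₀, x₀, rfl⟩ (show jointMinDisp S < l + ε by rw [← hldef]; linarith)
    obtain ⟨a, haS, haeq⟩ :=
      ((hSne.image (fun s : X ≃ᵢ X => dist x (s x))).csSup_mem (hSfin.image _))
    -- haeq : dist x (a x) = jointDispAt S x (definitionally)
    have haeq' : dist x (a x) = jointDispAt S x := haeq
    have hDa_lt : dist x (a x) < l + ε := by rw [haeq']; exact hx
    have hl_le : l ≤ jointDispAt S x := by
      rw [hldef]; exact csInf_le hbddrange ⟨x, rfl⟩
    have hDa_ge : l ≤ dist x (a x) := by rw [haeq']; exact hl_le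
    have hD_le : ∀ s ∈ S, dist x (s x) ≤ dist x (a x) := by
      intro s hs; rw [haeq']; exact hdispAt_le x s hs
    -- Gromov product lower bounds from the displacement lemma
    have hGam : ∀ (g : X ≃ᵢ X) (μ : ℝ), asympDisp {g} ≤ μ →
        (dist x (g x) - μ - 2*δ₁)/2 ≤ gp x (g⁻¹ x) (g x) := by
      intro g μ hμ
      have hdisp := disp_lemma hδ₁ h4 g x
      have e1 : dist x (g⁻¹ x) = dist x (g x) := dist_inv_apply g x
      have e2 : dist (g⁻¹ x) (g x) = dist x (g (g x)) := by
        rw [← g.dist_eq (g⁻¹ x) (g x)]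
        have h' : g (g⁻¹ x) = x := by simp
        rw [h']
      have hdef : gp x (g⁻¹ x) (g x) =
          (dist x (g⁻¹ x) + dist x (g x) - dist (g⁻¹ x) (g x))/2 := rfl
      rw [hdef, e1, e2]
      linarith [hdisp, hμ]
    have hells : ∀ s ∈ S, asympDisp {s} ≤ lam := by
      intro s hs
      have h1 : asympDisp {s} ≤ lamD S := le_csSup (hSfin.image _).bddAbove ⟨s, hs, rfl⟩
      have h2 : lamD S ≤ lam := by rw [hlamdef]; exact le_max_left _ _
      linarith
    have hellab : ∀ p ∈ S, ∀ q ∈ S, asympDisp {p * q} ≤ 2*lam := by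
      intro p hp q hq
      have h1 : asympDisp {p * q} ≤ lamD (S^2) := by
        apply le_csSup (hS2fin.image _).bddAbove
        exact ⟨p * q, by rw [pow_two]; exact Set.mul_mem_mul hp hq, rfl⟩
      have h2 : lamD (S^2)/2 ≤ lam := by rw [hlamdef]; exact le_max_right _ _
      linarith
    -- Dichotomy
    by_cases hcase : ∀ b' ∈ S, l - 2*t ≤ dist x (b' x) → t ≤ gp x (a x) (b' x)
    · -- move towards a x: all displacements drop below l, contradiction
      obtain ⟨seg, hseg⟩ := hgeo x (a x)
      have htIcc : t ∈ Set.Icc (0:ℝ) (dist x (a x)) :=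
        ⟨ht0.le, by linarith [hDa_ge, hlam0, ht0]⟩
      obtain ⟨y, hy, hy1, hy2⟩ := hseg.exists_point htIcc
      have hkey : ∀ s ∈ S, dist y (s y) < l := by
        intro s hs
        by_cases hsD : l - 2*t ≤ dist x (s x)
        · have hb1 := hcase s hs hsD
          have hb2 : t ≤ gp (s x) x (s (s x)) := by
            have hg := hGam s lam (hells s hs)
            have e3 : gp (s x) x (s (s x)) = gp x (s⁻¹ x) (s x) := by
              rw [← gp_isom s⁻¹ (s x) x (s (s x))]
              have e4 : s⁻¹ (s x) = x := by simp
              have e5 : s⁻¹ (s (s x)) = s x := by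
                have : s⁻¹ (s (s x)) = (s⁻¹ * s) (s x) := rfl
                rw [this, inv_mul_cancel]; rfl
              rw [e4, e5]
            rw [e3]
            linarith [hsD, hg]
          have hb3 : 2*t ≤ dist x (s x) := by linarith
          have hmv := move_lemma hδ₁ h4 s x y (a x) t hy1 hy2 hb1 hb2 hb3
          have hDs_lt : dist x (s x) < l + ε := lt_of_le_of_lt (hD_le s hs) hDa_lt
          linarith [hmv, hDs_lt, hε]
        · push_neg at hsD
          have htr := dist_triangle4 y x (s x) (s y)
          have e6 : dist (s x) (s y) = t := by rw [s.dist_eq, hy1]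
          have e7 : dist y x = t := by rw [dist_comm, hy1]
          linarith
      obtain ⟨s₁, hs₁, hs₁eq⟩ :=
        ((hSne.image (fun s : X ≃ᵢ X => dist y (s y))).csSup_mem (hSfin.image _))
      have hs₁eq' : dist y (s₁ y) = jointDispAt S y := hs₁eq
      have hly : l ≤ jointDispAt S y := by
        rw [hldef]; exact csInf_le hbddrange ⟨y, rfl⟩
      have := hkey s₁ hs₁
      rw [hs₁eq'] at this
      linarith
    · push_neg at hcase
      obtain ⟨b, hbS, hbD, hbgp⟩ := hcase
      have hDb_lt : dist x (b x) < l + ε := lt_of_le_of_lt (hD_le b hbS) hDa_lt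
      have hGa : 10*t - δ₁ ≤ gp x (a⁻¹ x) (a x) := by
        have := hGam a lam (hells a haS)
        linarith [hDa_ge]
      have hGb : 9*t - δ₁ ≤ gp x (b⁻¹ x) (b x) := by
        have := hGam b lam (hells b hbS)
        linarith [hbD]
      -- Step A
      have hA : gp x (a⁻¹ x) (b x) < t + δ₁ := by
        have h4a := h4 x (a x) (a⁻¹ x) (b x)
        rcases min_cases (gp x (a x) (a⁻¹ x)) (gp x (a⁻¹ x) (b x)) with ⟨heq, hle⟩ | ⟨heq, hle⟩
        · exfalso
          rw [heq] at h4a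
          have hcm := gp_comm x (a x) (a⁻¹ x)
          linarith [hbgp, hGa, ht9, hδ₁]
        · rw [heq] at h4a
          linarith [hbgp]
      -- distance to (a*b) x
      have e_ab : dist (a⁻¹ x) (b x) = dist x ((a*b) x) := by
        rw [← a.dist_eq (a⁻¹ x) (b x)]
        have h' : a (a⁻¹ x) = x := by simp
        rw [h']
        rfl
      have hdab : 2*l - 4*t - 2*δ₁ < dist x ((a*b) x) := by
        have hdef : gp x (a⁻¹ x) (b x) =
            (dist x (a⁻¹ x) + dist x (b x) - dist (a⁻¹ x) (b x))/2 := rfl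
        have e1 : dist x (a⁻¹ x) = dist x (a x) := dist_inv_apply a x
        rw [e1, e_ab] at hdef
        linarith [hA, hDa_ge, hbD, hdef]
      have A1 : l - 2*t - δ₁ - ε/2 < gp x ((a*b) x) (a x) := by
        have hdef : gp x ((a*b) x) (a x) =
            (dist x ((a*b) x) + dist x (a x) - dist ((a*b) x) (a x))/2 := rfl
        have e4 : dist ((a*b) x) (a x) = dist x (b x) := by
          have h' : (a*b) x = a (b x) := rfl
          rw [h', a.dist_eq, dist_comm]
        rw [e4] at hdef
        linarith [hdab, hDa_ge, hDb_lt, hdef]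
      have A2 : l - 3*t - δ₁ - ε/2 < gp x ((a*b)⁻¹ x) (b⁻¹ x) := by
        have hdef : gp x ((a*b)⁻¹ x) (b⁻¹ x) =
            (dist x ((a*b)⁻¹ x) + dist x (b⁻¹ x) - dist ((a*b)⁻¹ x) (b⁻¹ x))/2 := rfl
        have e5 : dist x ((a*b)⁻¹ x) = dist x ((a*b) x) := dist_inv_apply (a*b) x
        have e7 : dist x (b⁻¹ x) = dist x (b x) := dist_inv_apply b x
        have e6 : dist ((a*b)⁻¹ x) (b⁻¹ x) = dist x (a x) := by
          rw [← b.dist_eq ((a*b)⁻¹ x) (b⁻¹ x)]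
          have h7 : b (b⁻¹ x) = x := by simp
          have h8 : b ((a*b)⁻¹ x) = a⁻¹ x := by
            have h9 : b ((a*b)⁻¹ x) = (b * (a*b)⁻¹) x := rfl
            have h10 : b * (a*b)⁻¹ = a⁻¹ := by group
            rw [h9, h10]
          rw [h7, h8, dist_comm, dist_inv_apply a x]
        rw [e5, e6, e7] at hdef
        linarith [hdab, hbD, hDa_lt, hdef]
      -- bound the Gromov product m of (ab)x and (ab)⁻¹x
      have hm : gp x ((a*b) x) ((a*b)⁻¹ x) < t + 3*δ₁ := by
        by_contra hm'
        push_neg at hm'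
        have q1 : t + 2*δ₁ ≤ gp x (a x) ((a*b)⁻¹ x) := by
          have h4q := h4 x (a x) ((a*b) x) ((a*b)⁻¹ x)
          have hcm := gp_comm x (a x) ((a*b) x)
          have hmin : t + 3*δ₁ ≤ min (gp x (a x) ((a*b) x)) (gp x ((a*b) x) ((a*b)⁻¹ x)) :=
            le_min (by linarith [A1, ht9, hδ₁, hε, hcm]) hm'
          linarith
        have q2 : t + δ₁ ≤ gp x (a x) (b⁻¹ x) := by
          have h4q := h4 x (a x) ((a*b)⁻¹ x) (b⁻¹ x)
          have hmin : t + 2*δ₁ ≤ min (gp x (a x) ((a*b)⁻¹ x)) (gp x ((a*b)⁻¹ x) (b⁻¹ x)) :=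
            le_min q1 (by linarith [A2, ht9, hδ₁, hε])
          linarith
        have q3 : t ≤ gp x (a x) (b x) := by
          have h4q := h4 x (a x) (b⁻¹ x) (b x)
          have hmin : t + δ₁ ≤ min (gp x (a x) (b⁻¹ x)) (gp x (b⁻¹ x) (b x)) :=
            le_min q2 (by linarith [hGb, ht9, hδ₁])
          linarith
        linarith [hbgp, q3]
      -- conclude with the displacement lemma for a*b
      have hdisp_ab := disp_lemma hδ₁ h4 (a*b) x
      have e8 : dist x ((a*b) ((a*b) x)) =
          2*dist x ((a*b) x) - 2*gp x ((a*b) x) ((a*b)⁻¹ x) := by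
        have hdef : gp x ((a*b) x) ((a*b)⁻¹ x) =
            (dist x ((a*b) x) + dist x ((a*b)⁻¹ x) - dist ((a*b) x) ((a*b)⁻¹ x))/2 := rfl
        have e5 : dist x ((a*b)⁻¹ x) = dist x ((a*b) x) := dist_inv_apply (a*b) x
        have e9 : dist ((a*b) x) ((a*b)⁻¹ x) = dist x ((a*b) ((a*b) x)) := by
          rw [← (a*b).dist_eq ((a*b) x) ((a*b)⁻¹ x)]
          have h' : (a*b) ((a*b)⁻¹ x) = x := by simp
          rw [h', dist_comm]
        rw [e5, e9] at hdef
        linarith [hdef]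
      have hellab2 := hellab a haS b hbS
      linarith [hdisp_ab, e8, hm, hdab, hellab2, ht9, hδ₁]
  exact ⟨part1, part2, part3⟩
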